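/- arXiv:2602.21131 — 5 statements merged into one kernel-verified Lean document; each statement's English description precedes it below -/
import Mathlib

section
/- Let $A \geq c_2 > c_1 > 0$ and set $\beta := (c_2 - c_1)/(A - c_1)$. Given real numbers $a_0, \ldots, a_{N-1}$ such that $\sum_{j=0}^{N-1} a_j \geq c_2 N$ and $a_j \leq A$ for every $0 \leq j < N$, there exist $\ell \geq \beta N$ and integers $1 \leq n_1 < \cdots < n_\ell \leq N$ such that $\sum_{j=n}^{n_i - 1} a_j \geq c_1 (n_i - n)$ for every $0 \leq n < n_i$ and every $i = 1, \ldots, \ell$. -/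
/-- **Pliss's lemma.** -/
theorem pliss_lemma (A c₁ c₂ : ℝ) (hc₁ : 0 < c₁) (hc₁₂ : c₁ < c₂) (hA : c₂ ≤ A)
    (N : ℕ) (a : ℕ → ℝ)
    (hsum : c₂ * N ≤ ∑ j ∈ Finset.range N, a j)
    (hbd : ∀ j < N, a j ≤ A) :
    ∃ (ℓ : ℕ) (n : Fin ℓ → ℕ),
      ((c₂ - c₁) / (A - c₁)) * N ≤ (ℓ : ℝ) ∧
      StrictMono n ∧
      (∀ i, 1 ≤ n i ∧ n i ≤ N) ∧
      (∀ i, ∀ k < n i, c₁ * ((n i : ℝ) - (k : ℝ)) ≤ ∑ j ∈ Finset.Ico k (n i), a j) := by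
  classical
  have hAc : 0 < A - c₁ := by linarith
  set S : ℕ → ℝ := fun n => ∑ j ∈ Finset.range n, (a j - c₁) with hSdef
  set P : ℕ → Prop := fun m => ∀ k < m, S k ≤ S m with hPdef
  set E : Finset ℕ := (Finset.Icc 1 N).filter P with hEdef
  -- Key counting estimate
  have key : ∀ n, n ≤ N → ∀ k ≤ n,
      S k ≤ (((Finset.Icc 1 n).filter P).card : ℝ) * (A - c₁) := by
    intro n
    induction n with
    | zero =>
      intro _ k hk
      interval_cases k
      simp [S]
    | succ n ih =>
      intro hn k hk
      have hn' : n ≤ N := Nat.le_of_succ_le hn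
      have hmono : ((Finset.Icc 1 n).filter P).card ≤ ((Finset.Icc 1 (n+1)).filter P).card := by
        apply Finset.card_le_card
        exact Finset.filter_subset_filter _ (Finset.Icc_subset_Icc_right (Nat.le_succ n))
      have hmonoR : (((Finset.Icc 1 n).filter P).card : ℝ) * (A - c₁)
          ≤ (((Finset.Icc 1 (n+1)).filter P).card : ℝ) * (A - c₁) := by
        apply mul_le_mul_of_nonneg_right _ hAc.le
        exact_mod_cast hmono
      rcases Nat.lt_or_ge k (n+1) with h | h
      · exact le_trans (ih hn' k (Nat.lt_succ_iff.mp h)) hmonoR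
      · have hk1 : k = n + 1 := le_antisymm hk h
        subst hk1
        have hstep : S (n+1) = S n + (a n - c₁) := by
          simp [S, Finset.sum_range_succ]; push_cast; ring
        by_cases hPn : P (n+1)
        · have hins : (Finset.Icc 1 (n+1)).filter P
              = insert (n+1) ((Finset.Icc 1 n).filter P) := by
            rw [← Finset.insert_Icc_right_eq_Icc_add_one (by omega), Finset.filter_insert, if_pos hPn]
          have hnotmem : (n+1) ∉ (Finset.Icc 1 n).filter P := by
            intro hmem
            have := (Finset.mem_filter.mp hmem).1
            simp [Finset.mem_Icc] at this
          have hcard : ((Finset.Icc 1 (n+1)).filter P).card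
              = ((Finset.Icc 1 n).filter P).card + 1 := by
            rw [hins, Finset.card_insert_of_notMem hnotmem]
          have han : a n ≤ A := hbd n (by omega)
          have ihn := ih hn' n le_rfl
          rw [hstep, hcard]
          push_cast
          nlinarith
        · simp only [P, not_forall] at hPn
          obtain ⟨k, hk, hSk⟩ := hPn
          have h1 := ih hn' k (Nat.lt_succ_iff.mp hk)
          push_neg at hSk
          linarith
  -- lower bound on S N
  have hSN : (c₂ - c₁) * N ≤ S N := by
    have : S N = (∑ j ∈ Finset.range N, a j) - c₁ * N := by
      simp [S, Finset.sum_sub_distrib, mul_comm]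
    rw [this]; linarith
  have hSup := key N le_rfl N le_rfl
  refine ⟨E.card, E.orderEmbOfFin rfl, ?_, (E.orderEmbOfFin rfl).strictMono, ?_, ?_⟩
  · rw [div_mul_eq_mul_div, div_le_iff₀ hAc]
    calc (c₂ - c₁) * N ≤ S N := hSN
      _ ≤ (E.card : ℝ) * (A - c₁) := hSup
  · intro i
    have hmem := Finset.orderEmbOfFin_mem E rfl i
    have := Finset.mem_filter.mp hmem
    have hIcc := Finset.mem_Icc.mp this.1
    exact ⟨hIcc.1, hIcc.2⟩
  · intro i k hk
    have hmem := Finset.orderEmbOfFin_mem E rfl i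
    have hP : P (E.orderEmbOfFin rfl i) := (Finset.mem_filter.mp hmem).2
    set m := E.orderEmbOfFin rfl i with hm
    have h1 : S k ≤ S m := hP k hk
    have h2 : ∑ j ∈ Finset.Ico k m, (a j - c₁) = S m - S k :=
      Finset.sum_Ico_eq_sub _ hk.le
    have h3 : ∑ j ∈ Finset.Ico k m, (a j - c₁)
        = (∑ j ∈ Finset.Ico k m, a j) - ((m : ℝ) - k) * c₁ := by
      rw [Finset.sum_sub_distrib, Finset.sum_const, Nat.card_Ico, nsmul_eq_mul,
        Nat.cast_sub hk.le]
    have h4 : 0 ≤ (∑ j ∈ Finset.Ico k m, a j) - ((m : ℝ) - k) * c₁ := by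
      rw [← h3, h2]; linarith
    linarith
end

section
/- Let $m$ be a Borel probability measure on the circle $\mathbb{S}^1$. Define $Q(x) := \sup_{I \ni x} \frac{|I|}{m(I)}$, where the supremum runs over all arcs $I$ containing $x$ (with the convention that the ratio is $+\infty$ when $m(I) = 0$). Then $\log^+ Q \in L^1(m)$, i.e., $\int \max(\log Q(x), 0)\, dm(x) < \infty$. -/
open MeasureTheory Metric
open scoped ENNReal

/-- The maximal ratio `|I|/m(I)` over arcs (balls) of the circle containing `x`:
with the convention that the ratio is `∞` when `m(I) = 0` (ENNReal division). -/
noncomputable def maxRatio (m : Measure (AddCircle (1 : ℝ))) (x : AddCircle (1 : ℝ)) : ℝ≥0∞ :=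
  ⨆ (c : AddCircle (1 : ℝ)) (r : ℝ) (_ : 0 < r) (_ : x ∈ ball c r),
    volume (ball c r) / m (ball c r)

section Aux

lemma fin3_aux' : ∀ p q : Fin 3, ∃ k : Fin 3, k ≠ p ∧ k ≠ q := by decide

/-- Three real intervals with a common point: one of them is redundant. -/
lemma three_intervals' {a b : Fin 3 → ℝ} {x : ℝ} (h : ∀ i, x ∈ Set.Ioo (a i) (b i)) :
    ∃ k, ∀ y ∈ Set.Ioo (a k) (b k), ∃ l, l ≠ k ∧ y ∈ Set.Ioo (a l) (b l) := by
  obtain ⟨p, -, hp⟩ := Finset.exists_min_image Finset.univ a ⟨0, Finset.mem_univ 0⟩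
  obtain ⟨q, -, hq⟩ := Finset.exists_max_image Finset.univ b ⟨0, Finset.mem_univ 0⟩
  obtain ⟨k, hkp, hkq⟩ := fin3_aux' p q
  refine ⟨k, fun y hy => ?_⟩
  rcases le_or_gt y x with h1 | h1
  · refine ⟨p, hkp.symm, ?_, ?_⟩
    · exact lt_of_le_of_lt (hp k (Finset.mem_univ k)) hy.1
    · exact lt_of_le_of_lt h1 (h p).2
  · refine ⟨q, hkq.symm, ?_, ?_⟩
    · exact lt_trans (h q).1 h1
    · exact lt_of_lt_of_le hy.2 (hq k (Finset.mem_univ k))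

lemma coe_intcast_mul_one' (n : ℤ) : (((n : ℝ) * 1 : ℝ) : AddCircle (1:ℝ)) = 0 := by
  rw [AddCircle.coe_eq_zero_iff]
  exact ⟨n, by simp⟩

/-- Every point of a ball in the circle has a real lift in the corresponding interval. -/
lemma exists_lift_mem' {c r : ℝ} {y : AddCircle (1:ℝ)} (hy : y ∈ ball ((c:ℝ) : AddCircle (1:ℝ)) r) :
    ∃ y' : ℝ, ((y' : ℝ) : AddCircle (1:ℝ)) = y ∧ y' ∈ Set.Ioo (c - r) (c + r) := by
  obtain ⟨v, rfl⟩ := QuotientAddGroup.mk_surjective y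
  have hd : dist ((v:ℝ) : AddCircle (1:ℝ)) ((c:ℝ) : AddCircle (1:ℝ))
      = |(v - c) - round ((1:ℝ)⁻¹ * (v - c)) * 1| := by
    rw [dist_eq_norm, ← AddCircle.coe_sub, AddCircle.norm_eq]
  set u : ℝ := (v - c) - round ((1:ℝ)⁻¹ * (v - c)) * 1 with hu
  refine ⟨c + u, ?_, ?_⟩
  · have h1 : (c + u : ℝ) = v - (round ((1:ℝ)⁻¹ * (v - c)) : ℝ) * 1 := by rw [hu]; ring
    rw [h1, AddCircle.coe_sub, coe_intcast_mul_one', sub_zero]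
  · have : |u| < r := by rw [mem_ball, hd] at hy; exact hy
    rcases abs_lt.mp this with ⟨h1, h2⟩
    exact ⟨by linarith, by linarith⟩

/-- Projection of an interval lands in the corresponding ball. -/
lemma coe_mem_ball' {c r y' : ℝ} (hy : y' ∈ Set.Ioo (c - r) (c + r)) :
    ((y' : ℝ) : AddCircle (1:ℝ)) ∈ ball ((c:ℝ) : AddCircle (1:ℝ)) r := by
  have h1 : |y' - c| < r := abs_lt.mpr ⟨by linarith [hy.1], by linarith [hy.2]⟩
  rw [mem_ball, dist_eq_norm, ← AddCircle.coe_sub]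
  calc ‖((y' - c : ℝ) : AddCircle (1:ℝ))‖ ≤ ‖(y' - c : ℝ)‖ := QuotientAddGroup.norm_mk_le_norm
    _ = |y' - c| := Real.norm_eq_abs _
    _ < r := h1

/-- Three balls in the circle with a common point: one of them is redundant. -/
lemma three_balls' {c : Fin 3 → AddCircle (1:ℝ)} {r : Fin 3 → ℝ} {x : AddCircle (1:ℝ)}
    (h : ∀ i, x ∈ ball (c i) (r i)) :
    ∃ k, ∀ y ∈ ball (c k) (r k), ∃ l, l ≠ k ∧ y ∈ ball (c l) (r l) := by
  obtain ⟨x', rfl⟩ := QuotientAddGroup.mk_surjective x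
  have h' : ∀ i, ∃ ci' : ℝ, ((ci' : ℝ) : AddCircle (1:ℝ)) = c i ∧
      x' ∈ Set.Ioo (ci' - r i) (ci' + r i) := by
    intro i
    have : c i ∈ ball ((x' : ℝ) : AddCircle (1:ℝ)) (r i) := by
      rw [mem_ball, dist_comm]; exact h i
    obtain ⟨ci', hci, hmem⟩ := exists_lift_mem' this
    exact ⟨ci', hci, ⟨by linarith [hmem.2], by linarith [hmem.1]⟩⟩
  choose c' hc' hmem using h'
  obtain ⟨k, hk⟩ := three_intervals' (a := fun i => c' i - r i) (b := fun i => c' i + r i) hmem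
  refine ⟨k, fun y hy => ?_⟩
  rw [← hc' k] at hy
  obtain ⟨y', rfl, hy'⟩ := exists_lift_mem' hy
  obtain ⟨l, hlk, hyl⟩ := hk y' hy'
  exact ⟨l, hlk, by rw [← hc' l]; exact coe_mem_ball' hyl⟩

open scoped Classical in
/-- From any finite cover of `K` by balls one can extract a subcover with overlap at most 2. -/
lemma prune' {ι : Type*} (c : ι → AddCircle (1:ℝ)) (r : ι → ℝ)
    (s : Finset ι) : ∀ (K : Set (AddCircle (1:ℝ))), (K ⊆ ⋃ i ∈ s, ball (c i) (r i)) →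
    ∃ s' ⊆ s, (K ⊆ ⋃ i ∈ s', ball (c i) (r i)) ∧
      ∀ x : AddCircle (1:ℝ), (s'.filter (fun i => x ∈ ball (c i) (r i))).card ≤ 2 := by
  induction s using Finset.strongInduction with
  | _ s ih =>
    intro K hK
    by_cases hred : ∃ j ∈ s, K ⊆ ⋃ i ∈ s.erase j, ball (c i) (r i)
    · obtain ⟨j, hj, hcov⟩ := hred
      obtain ⟨s', hs1, hs2, hs3⟩ := ih (s.erase j) (Finset.erase_ssubset hj) K hcov
      exact ⟨s', hs1.trans (Finset.erase_subset _ _), hs2, hs3⟩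
    · refine ⟨s, Finset.Subset.refl s, hK, fun x => ?_⟩
      by_contra hx
      push_neg at hx
      have h3 : 3 ≤ (s.filter (fun i => x ∈ ball (c i) (r i))).card := hx
      obtain ⟨t, hts, hcard⟩ := Finset.exists_subset_card_eq h3
      obtain ⟨a, b, d, hab, had, hbd, rfl⟩ := Finset.card_eq_three.mp hcard
      have hmem : ∀ i ∈ ({a, b, d} : Finset ι), i ∈ s ∧ x ∈ ball (c i) (r i) := by
        intro i hi
        have := hts hi
        rw [Finset.mem_filter] at this
        exact this
      set C : Fin 3 → ι := fun i => if i = 0 then a else if i = 1 then b else d with hC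
      have hCmem : ∀ i : Fin 3, C i ∈ s ∧ x ∈ ball (c (C i)) (r (C i)) := by
        intro i
        fin_cases i
        · exact hmem a (by simp)
        · exact hmem b (by simp)
        · exact hmem d (by simp)
      have hCinj : Function.Injective C := by
        intro u v huv
        fin_cases u <;> fin_cases v <;> simp_all [hC] <;> tauto
      obtain ⟨k, hk⟩ := three_balls' (c := fun i => c (C i)) (r := fun i => r (C i))
        (fun i => (hCmem i).2)
      apply hred
      refine ⟨C k, (hCmem k).1, fun z hz => ?_⟩
      obtain ⟨i, hi⟩ := Set.mem_iUnion.mp (hK hz)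
      simp only [Set.mem_iUnion, exists_prop] at hi ⊢
      obtain ⟨his, hzi⟩ := hi
      by_cases hik : i = C k
      · subst hik
        obtain ⟨l, hlk, hzl⟩ := hk z hzi
        exact ⟨C l, Finset.mem_erase.mpr ⟨fun hh => hlk (hCinj hh), (hCmem l).1⟩, hzl⟩
      · exact ⟨i, Finset.mem_erase.mpr ⟨hik, his⟩, hzi⟩

open scoped Classical in
/-- A finite family of balls with overlap at most 2 has total length at most 2. -/
lemma sum_vol_le' {ι : Type*} (c : ι → AddCircle (1:ℝ)) (r : ι → ℝ) (s' : Finset ι)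
    (hover : ∀ x : AddCircle (1:ℝ), (s'.filter (fun i => x ∈ ball (c i) (r i))).card ≤ 2) :
    ∑ i ∈ s', volume (ball (c i) (r i)) ≤ 2 := by
  have h1 : ∑ i ∈ s', volume (ball (c i) (r i))
      = ∫⁻ x, ∑ i ∈ s', (ball (c i) (r i)).indicator (fun _ => (1:ℝ≥0∞)) x := by
    rw [lintegral_finset_sum]
    · exact Finset.sum_congr rfl fun i _ => (lintegral_indicator_one measurableSet_ball).symm
    · exact fun i _ => measurable_const.indicator measurableSet_ball
  rw [h1]
  have h2 : ∀ x : AddCircle (1:ℝ),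
      ∑ i ∈ s', (ball (c i) (r i)).indicator (fun _ => (1:ℝ≥0∞)) x ≤ 2 := by
    intro x
    have heq : ∑ i ∈ s', (ball (c i) (r i)).indicator (fun _ => (1:ℝ≥0∞)) x
        = ((s'.filter (fun i => x ∈ ball (c i) (r i))).card : ℝ≥0∞) := by
      rw [Finset.card_filter]
      push_cast
      refine Finset.sum_congr rfl fun i _ => ?_
      by_cases h : x ∈ ball (c i) (r i) <;> simp [Set.indicator, h]
    rw [heq]
    exact_mod_cast (by exact_mod_cast hover x : ((s'.filter _).card : ℝ≥0∞) ≤ ((2:ℕ) : ℝ≥0∞))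
  calc ∫⁻ x, ∑ i ∈ s', (ball (c i) (r i)).indicator (fun _ => (1:ℝ≥0∞)) x
      ≤ ∫⁻ _, 2 ∂(volume : Measure (AddCircle (1:ℝ))) := lintegral_mono h2
    _ = 2 * volume (Set.univ : Set (AddCircle (1:ℝ))) := by rw [lintegral_const]
    _ = 2 := by rw [AddCircle.measure_univ]; norm_num

/-- The open set of points of the circle lying in some ball of length-to-measure ratio `> t`. -/
def ballSet (m : Measure (AddCircle (1:ℝ))) (t : ℝ≥0∞) : Set (AddCircle (1:ℝ)) :=
  ⋃ (p : AddCircle (1:ℝ) × ℝ)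
    (_ : 0 < p.2 ∧ t < volume (ball p.1 p.2) / m (ball p.1 p.2)), ball p.1 p.2

lemma isOpen_ballSet (m : Measure (AddCircle (1:ℝ))) (t : ℝ≥0∞) : IsOpen (ballSet m t) :=
  isOpen_iUnion fun _ => isOpen_iUnion fun _ => isOpen_ball

lemma mem_ballSet_iff (m : Measure (AddCircle (1:ℝ))) (t : ℝ≥0∞) (x : AddCircle (1:ℝ)) :
    x ∈ ballSet m t ↔ t < maxRatio m x := by
  simp only [ballSet, Set.mem_iUnion]
  constructor
  · rintro ⟨⟨cc, rr⟩, ⟨hr, hratio⟩, hx⟩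
    refine lt_of_lt_of_le hratio ?_
    exact le_iSup_of_le cc (le_iSup_of_le rr (le_iSup_of_le hr (le_iSup_of_le hx le_rfl)))
  · intro h
    simp only [maxRatio, lt_iSup_iff] at h
    obtain ⟨cc, rr, hr, hx, hratio⟩ := h
    exact ⟨(cc, rr), ⟨hr, hratio⟩, hx⟩

/-- Weak-type bound: the measure of the points in some ball of ratio `> t` is at most `2/t`. -/
lemma weak_bound (m : Measure (AddCircle (1:ℝ))) [IsProbabilityMeasure m]
    (t : ℝ≥0∞) (ht0 : t ≠ 0) (htT : t ≠ ⊤) : m (ballSet m t) ≤ 2 / t := by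
  haveI : Fact ((0:ℝ) < 1) := ⟨one_pos⟩
  rw [(isOpen_ballSet m t).measure_eq_iSup_isClosed]
  refine iSup_le fun F => iSup_le fun hF => iSup_le fun hFc => ?_
  have hK : IsCompact F := hFc.isCompact
  set P : AddCircle (1:ℝ) × ℝ → Prop :=
    fun p => 0 < p.2 ∧ t < volume (ball p.1 p.2) / m (ball p.1 p.2) with hP
  have hcov : F ⊆ ⋃ q : Subtype P, ball q.1.1 q.1.2 := by
    rw [Set.iUnion_subtype]
    exact hF
  obtain ⟨s, hs⟩ := hK.elim_finite_subcover (fun q : Subtype P => ball q.1.1 q.1.2)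
    (fun q => isOpen_ball) hcov
  obtain ⟨s', hs's, hcov', hover⟩ :=
    prune' (fun q : Subtype P => q.1.1) (fun q : Subtype P => q.1.2) s F hs
  calc m F ≤ ∑ q ∈ s', m (ball q.1.1 q.1.2) :=
        (measure_mono hcov').trans (measure_biUnion_finset_le _ _)
    _ ≤ ∑ q ∈ s', volume (ball q.1.1 q.1.2) / t := by
        refine Finset.sum_le_sum fun q _ => ?_
        have hq := q.2.2
        rw [ENNReal.le_div_iff_mul_le (Or.inl ht0) (Or.inl htT), mul_comm]
        exact ENNReal.mul_le_of_le_div hq.le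
    _ = (∑ q ∈ s', volume (ball q.1.1 q.1.2)) / t := by
        simp [div_eq_mul_inv, Finset.sum_mul]
    _ ≤ 2 / t := ENNReal.div_le_div_right
        (sum_vol_le' (fun q : Subtype P => q.1.1) (fun q : Subtype P => q.1.2) s' hover) t

lemma measurable_maxRatio (m : Measure (AddCircle (1:ℝ))) : Measurable (maxRatio m) := by
  refine measurable_of_Ioi fun t => ?_
  have h : maxRatio m ⁻¹' Set.Ioi t = ballSet m t :=
    Set.ext fun x => (mem_ballSet_iff m t x).symm
  rw [h]
  exact (isOpen_ballSet m t).measurableSet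

end Aux

/-- `log⁺` of the maximal ratio of arc-length to measure is `m`-integrable:
in particular `Q < ∞` a.e. and `∫ log⁺ Q dm < ∞`. -/
theorem logPos_maxRatio_integrable (m : Measure (AddCircle (1 : ℝ)))
    [IsProbabilityMeasure m] :
    (∀ᵐ x ∂m, maxRatio m x < ⊤) ∧
    (∫⁻ x, ENNReal.ofReal (Real.log ((maxRatio m x).toReal)) ∂m) < ⊤ := by
  have key : ∀ t : ℝ≥0∞, t ≠ 0 → t ≠ ⊤ → m {x | t < maxRatio m x} ≤ 2 / t := by
    intro t h1 h2
    rw [show {x | t < maxRatio m x} = ballSet m t from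
      Set.ext fun x => (mem_ballSet_iff m t x).symm]
    exact weak_bound m t h1 h2
  constructor
  · rw [ae_iff]
    by_contra hne
    have hμS : m {x | ¬maxRatio m x < ⊤} ≠ 0 := hne
    have hhalf : m {x | ¬maxRatio m x < ⊤} / 2 ≠ 0 := by
      intro h
      rcases ENNReal.div_eq_zero_iff.mp h with h' | h'
      · exact hμS h'
      · exact (by norm_num : (2:ℝ≥0∞) ≠ ⊤) h' 
    obtain ⟨n, hn⟩ := ENNReal.exists_inv_nat_lt hhalf
    have hn0 : (n : ℝ≥0∞) ≠ 0 := by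
      intro h
      rw [h, ENNReal.inv_zero] at hn
      exact not_top_lt hn
    have hsub : {x | ¬maxRatio m x < ⊤} ⊆ {x | (n : ℝ≥0∞) < maxRatio m x} := by
      intro x hx
      simp only [Set.mem_setOf_eq, not_lt, top_le_iff] at hx
      simp only [Set.mem_setOf_eq, hx]
      exact ENNReal.natCast_lt_top n
    have hle : m {x | ¬maxRatio m x < ⊤} ≤ 2 * (n : ℝ≥0∞)⁻¹ := by
      rw [← div_eq_mul_inv]
      exact (measure_mono hsub).trans (key n hn0 (ENNReal.natCast_ne_top n))
    have hlt : 2 * (n : ℝ≥0∞)⁻¹ < 2 * (m {x | ¬maxRatio m x < ⊤} / 2) := by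
      rw [ENNReal.mul_lt_mul_iff_right (by norm_num) (by norm_num)]
      exact hn
    rw [ENNReal.mul_div_cancel' (by norm_num) (by norm_num)] at hlt
    exact absurd (hle.trans_lt hlt) (lt_irrefl _)
  · have hQm : Measurable (maxRatio m) := measurable_maxRatio m
    set g : AddCircle (1:ℝ) → ℝ := fun x => max (Real.log ((maxRatio m x).toReal)) 0 with hg
    have hg0 : 0 ≤ᵐ[m] g := Filter.Eventually.of_forall fun x => le_max_right _ _
    have hgm : Measurable g :=
      (Real.measurable_log.comp (ENNReal.measurable_toReal.comp hQm)).max measurable_const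
    have heq : ∀ x, ENNReal.ofReal (Real.log ((maxRatio m x).toReal)) = ENNReal.ofReal (g x) := by
      intro x
      rcases le_total (Real.log ((maxRatio m x).toReal)) 0 with h | h
      · rw [ENNReal.ofReal_of_nonpos h, hg]
        simp only [max_eq_right h, ENNReal.ofReal_zero]
      · rw [hg]
        simp only [max_eq_left h]
    have hint : IntegrableOn (fun t : ℝ => Real.exp (-t)) (Set.Ioi (0:ℝ)) := by
      have := exp_neg_integrableOn_Ioi 0 (zero_lt_one (α := ℝ))
      simpa using this
    have hbm : Measurable (fun t : ℝ => 2 * ENNReal.ofReal (Real.exp (-t))) :=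
      (ENNReal.measurable_ofReal.comp (Real.continuous_exp.measurable.comp measurable_neg)).const_mul 2
    calc ∫⁻ x, ENNReal.ofReal (Real.log ((maxRatio m x).toReal)) ∂m
        = ∫⁻ x, ENNReal.ofReal (g x) ∂m := by simp_rw [heq]
      _ = ∫⁻ t in Set.Ioi (0:ℝ), m {a | t < g a} :=
          lintegral_eq_lintegral_meas_lt m hg0 hgm.aemeasurable
      _ ≤ ∫⁻ t in Set.Ioi (0:ℝ), 2 * ENNReal.ofReal (Real.exp (-t)) := by
          refine setLIntegral_mono hbm fun t ht => ?_
          have ht0 : (0:ℝ) < t := ht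
          have hsub : {a | t < g a} ⊆ {a | ENNReal.ofReal (Real.exp t) < maxRatio m a} := by
            intro a ha
            have hga : t < g a := ha
            have hlog : t < Real.log ((maxRatio m a).toReal) := by
              by_contra hcon
              push_neg at hcon
              have : g a ≤ t := by
                rw [hg]
                exact max_le hcon ht0.le
              exact absurd hga (not_lt_of_ge this)
            have hv0 : 0 < (maxRatio m a).toReal := by
              rcases lt_or_eq_of_le (ENNReal.toReal_nonneg (a := maxRatio m a)) with h | h
              · exact h
              · rw [← h, Real.log_zero] at hlog
                exact absurd (ht0.trans hlog) (lt_irrefl _)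
            have hexp : Real.exp t < (maxRatio m a).toReal := by
              calc Real.exp t < Real.exp (Real.log ((maxRatio m a).toReal)) :=
                    Real.exp_lt_exp.mpr hlog
                _ = (maxRatio m a).toReal := Real.exp_log hv0
            have hne : maxRatio m a ≠ ⊤ := by
              intro hT
              rw [hT, ENNReal.toReal_top] at hv0
              exact absurd hv0 (lt_irrefl _)
            have : ENNReal.ofReal (Real.exp t) < ENNReal.ofReal ((maxRatio m a).toReal) :=
              (ENNReal.ofReal_lt_ofReal_iff hv0).mpr hexp
            rw [ENNReal.ofReal_toReal hne] at this
            exact this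
          refine (measure_mono hsub).trans ?_
          have hkey := key (ENNReal.ofReal (Real.exp t))
            (ne_of_gt (ENNReal.ofReal_pos.mpr (Real.exp_pos t))) ENNReal.ofReal_ne_top
          refine le_trans (le_of_eq rfl) (hkey.trans (le_of_eq ?_))
          rw [div_eq_mul_inv, ← ENNReal.ofReal_inv_of_pos (Real.exp_pos t),
            ← Real.exp_neg]
      _ = 2 * ∫⁻ t in Set.Ioi (0:ℝ), ENNReal.ofReal (Real.exp (-t)) :=
          lintegral_const_mul 2
            (ENNReal.measurable_ofReal.comp (Real.continuous_exp.measurable.comp measurable_neg))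
      _ < ⊤ := by
          rw [← ofReal_integral_eq_lintegral_ofReal hint
            (Filter.Eventually.of_forall fun x => (Real.exp_pos _).le)]
          exact ENNReal.mul_lt_top (by norm_num) ENNReal.ofReal_lt_top
end

section
/- Let $\nu$ be a finite Borel measure on $[0,1]$ and $0 < a < 1$. Then for Lebesgue-almost every $t \in [0,1]$, the series $\sum_{k=1}^{\infty} \nu((t - a^k, t + a^k))$ converges. -/
open MeasureTheory Set
open scoped ENNReal

private lemma shrink_set_meas (r : ℝ) :
    MeasurableSet {p : ℝ × ℝ | p.1 - r < p.2 ∧ p.2 < p.1 + r} := by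
  apply MeasurableSet.inter
  · exact measurableSet_lt ((measurable_fst).sub measurable_const) measurable_snd
  · exact measurableSet_lt measurable_snd ((measurable_fst).add measurable_const)

private lemma shrink_preimage (r t : ℝ) :
    Prod.mk t ⁻¹' {p : ℝ × ℝ | p.1 - r < p.2 ∧ p.2 < p.1 + r} = Ioo (t - r) (t + r) := by
  ext x; simp [Ioo, and_comm]

private lemma shrink_meas (ν : Measure ℝ) [SFinite ν] (r : ℝ) :
    Measurable fun t : ℝ => ν (Ioo (t - r) (t + r)) := by
  have := measurable_measure_prodMk_left (ν := ν) (shrink_set_meas r)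
  simpa [shrink_preimage, Ioo] using this

private lemma key_bound (ν : Measure ℝ) [IsFiniteMeasure ν] (r : ℝ) (hr : 0 ≤ r) :
    ∫⁻ t in Icc (0:ℝ) 1, ν (Ioo (t - r) (t + r)) ≤ ENNReal.ofReal (2 * r) * ν univ := by
  set s := {p : ℝ × ℝ | p.1 - r < p.2 ∧ p.2 < p.1 + r}
  have hs : MeasurableSet s := shrink_set_meas r
  calc ∫⁻ t in Icc (0:ℝ) 1, ν (Ioo (t - r) (t + r))
      ≤ ∫⁻ t, ν (Ioo (t - r) (t + r)) := setLIntegral_le_lintegral _ _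
    _ = ∫⁻ t, ∫⁻ x, s.indicator 1 (t, x) ∂ν ∂volume := by
        refine lintegral_congr fun t => ?_
        rw [show (fun x => s.indicator 1 (t, x)) = (Ioo (t - r) (t + r)).indicator 1 from ?_]
        · rw [lintegral_indicator_one measurableSet_Ioo]
        · funext x
          have : (t, x) ∈ s ↔ x ∈ Ioo (t - r) (t + r) := by
            simp [s, Ioo, and_comm]
          by_cases h : x ∈ Ioo (t - r) (t + r) <;>
            simp [Set.indicator, this, h]
    _ = ∫⁻ x, ∫⁻ t, s.indicator 1 (t, x) ∂volume ∂ν := by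
        apply lintegral_lintegral_swap
        exact ((measurable_one.indicator hs).aemeasurable)
    _ = ∫⁻ x, ENNReal.ofReal (2 * r) ∂ν := by
        refine lintegral_congr fun x => ?_
        have hset : (fun t => s.indicator (1 : ℝ × ℝ → ℝ≥0∞) (t, x)) =
            (Ioo (x - r) (x + r)).indicator 1 := by
          funext t
          have : (t, x) ∈ s ↔ t ∈ Ioo (x - r) (x + r) := by
            constructor
            · rintro ⟨h1, h2⟩; exact ⟨by linarith, by linarith⟩
            · rintro ⟨h1, h2⟩; exact ⟨by linarith, by linarith⟩
          by_cases h : t ∈ Ioo (x - r) (x + r) <;> simp [Set.indicator, this, h]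
        rw [hset, lintegral_indicator_one measurableSet_Ioo, Real.volume_Ioo]
        congr 1; ring
    _ ≤ ENNReal.ofReal (2 * r) * ν univ := (lintegral_const _).le

/-- For a finite Borel measure `ν` on `[0,1]` and `0 < a < 1`, for Lebesgue-a.e.
`t ∈ [0,1]` the series `∑ₖ ν((t - aᵏ, t + aᵏ))` converges. -/
theorem summable_measure_shrinking_balls (ν : Measure ℝ) [IsFiniteMeasure ν]
    (hsupp : ν ((Set.Icc (0 : ℝ) 1)ᶜ) = 0)
    (a : ℝ) (ha0 : 0 < a) (ha1 : a < 1) :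
    ∀ᵐ t ∂(volume.restrict (Set.Icc (0 : ℝ) 1)),
      Summable fun k : ℕ => (ν (Set.Ioo (t - a ^ (k + 1)) (t + a ^ (k + 1)))).toReal := by
  set F : ℕ → ℝ → ℝ≥0∞ := fun k t => ν (Ioo (t - a ^ (k + 1)) (t + a ^ (k + 1))) with hF
  have hFmeas : ∀ k, Measurable (F k) := fun k => shrink_meas ν _
  have hsum : Summable (fun k : ℕ => 2 * a ^ (k + 1)) := by
    have := (summable_geometric_of_lt_one ha0.le ha1).mul_left (2 * a)
    exact this.congr fun k => by ring
  have hlt : ∫⁻ t in Icc (0:ℝ) 1, ∑' k, F k t ∂volume < ⊤ := by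
    rw [lintegral_tsum (fun k => (hFmeas k).aemeasurable)]
    calc ∑' k, ∫⁻ t in Icc (0:ℝ) 1, F k t ∂volume
        ≤ ∑' k, ENNReal.ofReal (2 * a ^ (k + 1)) * ν univ := by
          exact ENNReal.tsum_le_tsum fun k =>
            key_bound ν _ (by positivity)
      _ = (∑' k, ENNReal.ofReal (2 * a ^ (k + 1))) * ν univ := ENNReal.tsum_mul_right
      _ < ⊤ := by
          apply ENNReal.mul_lt_top _ (measure_lt_top ν univ)
          rw [← ENNReal.ofReal_tsum_of_nonneg (fun k => by positivity) hsum]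
          exact ENNReal.ofReal_lt_top
  have hae : ∀ᵐ t ∂(volume.restrict (Set.Icc (0 : ℝ) 1)), ∑' k, F k t < ⊤ :=
    ae_lt_top (Measurable.ennreal_tsum hFmeas) hlt.ne
  filter_upwards [hae] with t ht
  exact ENNReal.summable_toReal ht.ne
end

section
/- Let $(\Omega, P)$ be a probability space and $X, Y, Z$ random variables with values in standard Borel spaces. Say two random variables $U, V$ are quasi-independent if the joint distribution of $(U,V)$ is mutually absolutely continuous with the product of the marginal distributions. Assume: (1) $X$ and $Y$ are quasi-independent conditionally on $Z$ (i.e., for a.e. value $z$ of $Z$, $X$ and $Y$ are quasi-independent under the conditional law given $Z = z$); (2) $X$ and $Z$ are quasi-independent conditionally on $Y$; and (3) $Y$ and $Z$ are quasi-independent. Then the joint distribution of $(X, Y, Z)$ is mutually absolutely continuous with the product of the three marginal distributions. -/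
open MeasureTheory ProbabilityTheory

/-- Two (joint/product) laws are *quasi-independent* when they are mutually
absolutely continuous. -/
def MutuallyAC {α : Type*} [MeasurableSpace α] (ρ σ : Measure α) : Prop :=
  ρ ≪ σ ∧ σ ≪ ρ

namespace MutuallyAC

variable {α β : Type*} [MeasurableSpace α] [MeasurableSpace β]

lemma refl (ρ : Measure α) : MutuallyAC ρ ρ := ⟨.rfl, .rfl⟩

lemma symm {ρ σ : Measure α} (h : MutuallyAC ρ σ) : MutuallyAC σ ρ := ⟨h.2, h.1⟩

lemma trans {ρ σ τ : Measure α} (h : MutuallyAC ρ σ) (h' : MutuallyAC σ τ) :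
    MutuallyAC ρ τ := ⟨h.1.trans h'.1, h'.2.trans h.2⟩

lemma map {ρ σ : Measure α} (h : MutuallyAC ρ σ) {f : α → β} (hf : Measurable f) :
    MutuallyAC (ρ.map f) (σ.map f) := ⟨h.1.map hf, h.2.map hf⟩

end MutuallyAC

section Helpers

variable {A B C G : Type*} [MeasurableSpace A] [MeasurableSpace B] [MeasurableSpace C]
  [MeasurableSpace G]

open ProbabilityTheory

lemma mutuallyAC_compProd_right (μ : Measure A) [SFinite μ]
    (κ η : Kernel A G) [IsSFiniteKernel κ] [IsSFiniteKernel η]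
    (h : ∀ᵐ a ∂μ, MutuallyAC (κ a) (η a)) :
    MutuallyAC (μ ⊗ₘ κ) (μ ⊗ₘ η) :=
  ⟨Measure.AbsolutelyContinuous.compProd_right (h.mono fun _ ha => ha.1),
   Measure.AbsolutelyContinuous.compProd_right (h.mono fun _ ha => ha.2)⟩

lemma mutuallyAC_compProd_left {μ ν : Measure A} [SFinite μ] [SFinite ν]
    (h : MutuallyAC μ ν) (κ : Kernel A G) :
    MutuallyAC (μ ⊗ₘ κ) (ν ⊗ₘ κ) :=
  ⟨Measure.AbsolutelyContinuous.compProd_left h.1 κ,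
   Measure.AbsolutelyContinuous.compProd_left h.2 κ⟩

/-- Hard direction: absolute continuity of comp-products gives a.e. fiberwise
absolute continuity. -/
lemma ae_absolutelyContinuous_of_compProd [MeasurableSpace.CountablyGenerated G]
    (μ : Measure A) [SFinite μ] (κ η : Kernel A G) [IsFiniteKernel κ] [IsFiniteKernel η]
    (h : μ ⊗ₘ κ ≪ μ ⊗ₘ η) :
    ∀ᵐ a ∂μ, κ a ≪ η a := by
  have hSm := Kernel.measurableSet_mutuallySingularSet κ η
  have h0 : (μ ⊗ₘ η) (Kernel.mutuallySingularSet κ η) = 0 := by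
    rw [Measure.compProd_apply hSm]
    have : ∀ a, η a (Prod.mk a ⁻¹' Kernel.mutuallySingularSet κ η) = 0 := fun a =>
      Kernel.measure_mutuallySingularSetSlice κ η a
    simp [this]
  have h1 : (μ ⊗ₘ κ) (Kernel.mutuallySingularSet κ η) = 0 := h h0
  rw [Measure.compProd_apply hSm,
    lintegral_eq_zero_iff (Kernel.measurable_kernel_prodMk_left hSm)] at h1
  filter_upwards [h1] with a ha
  rw [← Kernel.singularPart_eq_zero_iff_absolutelyContinuous,
    Kernel.singularPart_eq_zero_iff_measure_eq_zero]
  exact ha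

end Helpers

section Helpers2

variable {A B C D G : Type*} [MeasurableSpace A] [MeasurableSpace B] [MeasurableSpace C]
  [MeasurableSpace D] [MeasurableSpace G]

lemma compProd_map_fiber (μ : Measure A) [SFinite μ] (κ : Kernel A B) [IsSFiniteKernel κ]
    {f : B → C} (hf : Measurable f) :
    (μ ⊗ₘ κ).map (Prod.map id f) = μ ⊗ₘ (κ.map f) := by
  ext s hs
  rw [Measure.map_apply (measurable_id.prodMap hf) hs,
    Measure.compProd_apply (hs.preimage (measurable_id.prodMap hf)),
    Measure.compProd_apply hs]
  refine lintegral_congr fun a => ?_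
  rw [Kernel.map_apply _ hf, Measure.map_apply hf (measurable_prodMk_left hs)]
  rfl

lemma kernel_comap_comap (κ : Kernel A B) {f : C → A} {g : D → C}
    (hf : Measurable f) (hg : Measurable g) :
    (κ.comap f hf).comap g hg = κ.comap (f ∘ g) (hf.comp hg) := by
  ext a s
  simp [Kernel.comap_apply]

lemma compProd_prod_assoc (ν : Measure C) [IsFiniteMeasure ν]
    (κa : Kernel C A) (κb : Kernel C B) [IsFiniteKernel κa] [IsFiniteKernel κb] :
    (ν ⊗ₘ (κa.prod κb)).map (fun p => ((p.1, p.2.2), p.2.1)) =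
      (ν ⊗ₘ κb) ⊗ₘ (κa.comap Prod.fst measurable_fst) := by
  have hm : Measurable (fun p : C × A × B => ((p.1, p.2.2), p.2.1)) :=
    (measurable_fst.prodMk measurable_snd.snd).prodMk measurable_snd.fst
  have key : ∀ (s : Set (C × B)) (t : Set A), MeasurableSet s → MeasurableSet t →
      ((ν ⊗ₘ (κa.prod κb)).map (fun p => ((p.1, p.2.2), p.2.1))) (s ×ˢ t) =
      ((ν ⊗ₘ κb) ⊗ₘ (κa.comap Prod.fst measurable_fst)) (s ×ˢ t) := by
    intro s t hs ht
    rw [Measure.map_apply hm (hs.prod ht),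
      Measure.compProd_apply ((hs.prod ht).preimage hm)]
    rw [Measure.compProd_apply_prod hs ht]
    have hsec : ∀ c : C, (Prod.mk c ⁻¹' ((fun p : C × A × B => ((p.1, p.2.2), p.2.1)) ⁻¹'
        (s ×ˢ t))) = t ×ˢ (Prod.mk c ⁻¹' s) := by
      intro c
      ext ⟨x, y⟩
      simp only [Set.mem_preimage, Set.mem_prod]
      exact and_comm
    calc ∫⁻ c, (κa.prod κb) c (Prod.mk c ⁻¹'
            ((fun p : C × A × B => ((p.1, p.2.2), p.2.1)) ⁻¹' (s ×ˢ t))) ∂ν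
        = ∫⁻ c, κa c t * κb c (Prod.mk c ⁻¹' s) ∂ν := by
          refine lintegral_congr fun c => ?_
          rw [hsec c, Kernel.prod_apply, Measure.prod_prod]
      _ = ∫⁻ p in s, (κa.comap Prod.fst measurable_fst) p t ∂(ν ⊗ₘ κb) := by
          simp_rw [Kernel.comap_apply]
          rw [← lintegral_indicator hs]
          have hfm : Measurable (s.indicator fun p : C × B => κa p.1 t) :=
            Measurable.indicator (by exact (Kernel.measurable_coe κa ht).comp measurable_fst) hs
          rw [Measure.lintegral_compProd hfm]
          refine lintegral_congr fun c => ?_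
          have h' : ∀ y : B, s.indicator (fun p : C × B => κa p.1 t) (c, y)
              = (Prod.mk c ⁻¹' s).indicator (fun _ => κa c t) y := by
            intro y
            rfl
          simp_rw [h']
          rw [lintegral_indicator_const (measurable_prodMk_left hs)]
  refine MeasureTheory.ext_of_generate_finite _ generateFrom_prod.symm isPiSystem_prod ?_ ?_
  · rintro _ ⟨s, hs, t, ht, rfl⟩
    exact key s t hs ht
  · rw [← Set.univ_prod_univ]
    exact key _ _ MeasurableSet.univ MeasurableSet.univ

lemma map_compProd_comap (μ : Measure C) [IsFiniteMeasure μ] {g : C → D} (hg : Measurable g)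
    (κ : Kernel D A) [IsFiniteKernel κ] :
    (μ ⊗ₘ (κ.comap g hg)).map (Prod.map g id) = (μ.map g) ⊗ₘ κ := by
  have hmap : IsFiniteMeasure (μ.map g) := by
    constructor
    rw [Measure.map_apply hg MeasurableSet.univ]
    exact measure_lt_top _ _
  have key : ∀ (s : Set D) (t : Set A), MeasurableSet s → MeasurableSet t →
      ((μ ⊗ₘ (κ.comap g hg)).map (Prod.map g id)) (s ×ˢ t) = ((μ.map g) ⊗ₘ κ) (s ×ˢ t) := by
    intro s t hs ht
    rw [Measure.map_apply (hg.prodMap measurable_id) (hs.prod ht),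
      Set.preimage_prod_map_prod, Set.preimage_id,
      Measure.compProd_apply_prod (hs.preimage hg) ht,
      Measure.compProd_apply_prod hs ht,
      setLIntegral_map hs (Kernel.measurable_coe κ ht) hg]
    simp_rw [Kernel.comap_apply]
  refine MeasureTheory.ext_of_generate_finite _ generateFrom_prod.symm isPiSystem_prod ?_ ?_
  · rintro _ ⟨s, hs, t, ht, rfl⟩
    exact key s t hs ht
  · rw [← Set.univ_prod_univ]
    exact key _ _ MeasurableSet.univ MeasurableSet.univ

lemma mutuallyAC_snd_compProd (μ : Measure A) [IsProbabilityMeasure μ]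
    (κ : Kernel A G) [IsMarkovKernel κ] (ρ : Measure G)
    (h : ∀ᵐ a ∂μ, MutuallyAC (κ a) ρ) :
    MutuallyAC ((μ ⊗ₘ κ).snd) ρ := by
  have key : ∀ s : Set G, MeasurableSet s →
      (((μ ⊗ₘ κ).snd) s = 0 ↔ ∀ᵐ a ∂μ, κ a s = 0) := by
    intro s hs
    rw [Measure.snd_apply hs, Measure.compProd_apply (measurable_snd hs)]
    have : ∀ a : A, κ a (Prod.mk a ⁻¹' (Prod.snd ⁻¹' s)) = κ a s := fun _ => rfl
    simp_rw [this]
    rw [lintegral_eq_zero_iff (Kernel.measurable_coe κ hs)]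
    rfl
  haveI : (ae μ).NeBot := ae_neBot.2 (IsProbabilityMeasure.ne_zero μ)
  constructor
  · refine Measure.AbsolutelyContinuous.mk fun s hs h0 => ?_
    exact (key s hs).2 (by filter_upwards [h] with a ha using ha.1 h0)
  · refine Measure.AbsolutelyContinuous.mk fun s hs h0 => ?_
    obtain ⟨a, ha1, ha2⟩ := (((key s hs).1 h0).and h).exists
    exact ha2.2 ha1

lemma ae_prod_snd (μ : Measure A) (ν : Measure B) [IsProbabilityMeasure μ] [SFinite ν]
    {Q : B → Prop} (h : ∀ᵐ b ∂ν, Q b) : ∀ᵐ p ∂μ.prod ν, Q p.2 := by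
  refine ae_of_ae_map measurable_snd.aemeasurable ?_
  rwa [show (μ.prod ν).map Prod.snd = ν from Measure.snd_prod]

end Helpers2
/-- If `X` and `Y` are quasi-independent conditionally on `Z`, `X` and `Z` are
quasi-independent conditionally on `Y`, and `Y` and `Z` are quasi-independent, then
the joint law of `(X, Y, Z)` is mutually absolutely continuous with the product of
the three marginals. -/
theorem quasi_independence_of_pairwise
    {Ω α β γ : Type*}
    [MeasurableSpace Ω] [MeasurableSpace α] [MeasurableSpace β] [MeasurableSpace γ]
    [StandardBorelSpace α] [StandardBorelSpace β] [StandardBorelSpace γ]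
    [Nonempty α] [Nonempty β] [Nonempty γ]
    (P : Measure Ω) [IsProbabilityMeasure P]
    (X : Ω → α) (Y : Ω → β) (Z : Ω → γ)
    (hX : Measurable X) (hY : Measurable Y) (hZ : Measurable Z)
    (h1 : ∀ᵐ z ∂(P.map Z),
      MutuallyAC (condDistrib (fun ω => (X ω, Y ω)) Z P z)
        (((condDistrib (fun ω => (X ω, Y ω)) Z P z).map Prod.fst).prod
          ((condDistrib (fun ω => (X ω, Y ω)) Z P z).map Prod.snd)))
    (h2 : ∀ᵐ y ∂(P.map Y),
      MutuallyAC (condDistrib (fun ω => (X ω, Z ω)) Y P y)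
        (((condDistrib (fun ω => (X ω, Z ω)) Y P y).map Prod.fst).prod
          ((condDistrib (fun ω => (X ω, Z ω)) Y P y).map Prod.snd)))
    (h3 : MutuallyAC (P.map (fun ω => (Y ω, Z ω))) ((P.map Y).prod (P.map Z))) :
    MutuallyAC (P.map (fun ω => (X ω, Y ω, Z ω)))
      ((P.map X).prod ((P.map Y).prod (P.map Z))) := by
  have hXY : Measurable fun ω => (X ω, Y ω) := hX.prodMk hY
  have hms : Measurable (Prod.snd : β × γ → γ) := measurable_snd
  have hmw : Measurable (Prod.swap : γ × β → β × γ) := measurable_swap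
  have hXZ : Measurable fun ω => (X ω, Z ω) := hX.prodMk hZ
  have hYZ : Measurable fun ω => (Y ω, Z ω) := hY.prodMk hZ
  have hZY : Measurable fun ω => (Z ω, Y ω) := hZ.prodMk hY
  haveI : IsProbabilityMeasure (P.map X) := Measure.isProbabilityMeasure_map hX.aemeasurable
  haveI : IsProbabilityMeasure (P.map Y) := Measure.isProbabilityMeasure_map hY.aemeasurable
  haveI : IsProbabilityMeasure (P.map Z) := Measure.isProbabilityMeasure_map hZ.aemeasurable
  haveI : IsProbabilityMeasure (P.map fun ω => (Y ω, Z ω)) :=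
    Measure.isProbabilityMeasure_map hYZ.aemeasurable
  haveI : IsProbabilityMeasure (P.map fun ω => (Z ω, Y ω)) :=
    Measure.isProbabilityMeasure_map hZY.aemeasurable
  haveI : IsProbabilityMeasure (P.map fun ω => (Z ω, (X ω, Y ω))) :=
    Measure.isProbabilityMeasure_map (hZ.prodMk hXY).aemeasurable
  haveI : IsProbabilityMeasure (P.map fun ω => (Y ω, (X ω, Z ω))) :=
    Measure.isProbabilityMeasure_map (hY.prodMk hXZ).aemeasurable
  set κ : Kernel γ (α × β) := condDistrib (fun ω => (X ω, Y ω)) Z P with hκdef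
  set η : Kernel β (α × γ) := condDistrib (fun ω => (X ω, Z ω)) Y P with hηdef
  set κ1 : Kernel γ α := κ.map Prod.fst with hκ1
  set κ2 : Kernel γ β := κ.map Prod.snd with hκ2
  set η1 : Kernel β α := η.map Prod.fst with hη1
  set η2 : Kernel β γ := η.map Prod.snd with hη2
  haveI : IsMarkovKernel κ1 := hκ1 ▸ Kernel.IsMarkovKernel.map κ measurable_fst
  haveI : IsMarkovKernel κ2 := hκ2 ▸ Kernel.IsMarkovKernel.map κ measurable_snd
  haveI : IsMarkovKernel η1 := hη1 ▸ Kernel.IsMarkovKernel.map η measurable_fst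
  haveI : IsMarkovKernel η2 := hη2 ▸ Kernel.IsMarkovKernel.map η measurable_snd
  -- disintegration identities
  have E1 : P.map (fun ω => (Z ω, (X ω, Y ω))) = (P.map Z) ⊗ₘ κ := by
    have hfst : (P.map (fun ω => (Z ω, (X ω, Y ω)))).fst = P.map Z :=
      Measure.fst_map_prodMk₀ hXY.aemeasurable
    have hk : κ = (P.map (fun ω => (Z ω, (X ω, Y ω)))).condKernel := by
      rw [hκdef, condDistrib_def]
    rw [hk, ← hfst]
    exact (Measure.disintegrate _ _).symm
  have E1' : P.map (fun ω => (Y ω, (X ω, Z ω))) = (P.map Y) ⊗ₘ η := by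
    have hfst : (P.map (fun ω => (Y ω, (X ω, Z ω)))).fst = P.map Y :=
      Measure.fst_map_prodMk₀ hXZ.aemeasurable
    have hk : η = (P.map (fun ω => (Y ω, (X ω, Z ω)))).condKernel := by
      rw [hηdef, condDistrib_def]
    rw [hk, ← hfst]
    exact (Measure.disintegrate _ _).symm
  have E2 : (P.map Z) ⊗ₘ κ2 = P.map (fun ω => (Z ω, Y ω)) := by
    rw [hκ2, ← compProd_map_fiber _ _ measurable_snd, ← E1,
      Measure.map_map (measurable_id.prodMap measurable_snd) (hZ.prodMk hXY)]
    rfl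
  have E3 : (P.map Z) ⊗ₘ κ1 = P.map (fun ω => (Z ω, X ω)) := by
    rw [hκ1, ← compProd_map_fiber _ _ measurable_fst, ← E1,
      Measure.map_map (measurable_id.prodMap measurable_fst) (hZ.prodMk hXY)]
    rfl
  have E2' : (P.map Y) ⊗ₘ η2 = P.map (fun ω => (Y ω, Z ω)) := by
    rw [hη2, ← compProd_map_fiber _ _ measurable_snd, ← E1',
      Measure.map_map (measurable_id.prodMap measurable_snd) (hY.prodMk hXZ)]
    rfl
  -- side 1
  have h1' : ∀ᵐ z ∂(P.map Z), MutuallyAC (κ z) ((κ1.prod κ2) z) := by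
    filter_upwards [h1] with z hz
    rw [Kernel.prod_apply, hκ1, hκ2, Kernel.map_apply _ measurable_fst,
      Kernel.map_apply _ measurable_snd]
    exact hz
  have C1 : MutuallyAC ((P.map Z) ⊗ₘ κ) ((P.map Z) ⊗ₘ (κ1.prod κ2)) :=
    mutuallyAC_compProd_right _ _ _ h1'
  have hm2 : Measurable (fun p : γ × α × β => ((p.1, p.2.2), p.2.1)) :=
    (measurable_fst.prodMk measurable_snd.snd).prodMk measurable_snd.fst
  have C2 := C1.map hm2
  have EM1 : ((P.map Z) ⊗ₘ κ).map (fun p : γ × α × β => ((p.1, p.2.2), p.2.1))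
      = P.map (fun ω => ((Z ω, Y ω), X ω)) := by
    rw [← E1, Measure.map_map hm2 (hZ.prodMk hXY)]
    rfl
  have ER1 : ((P.map Z) ⊗ₘ (κ1.prod κ2)).map (fun p : γ × α × β => ((p.1, p.2.2), p.2.1))
      = (P.map (fun ω => (Z ω, Y ω))) ⊗ₘ (κ1.comap Prod.fst measurable_fst) := by
    rw [compProd_prod_assoc, E2]
  rw [EM1, ER1] at C2
  have hswid : Measurable (Prod.map (Prod.swap : γ × β → β × γ) (id : α → α)) :=
    measurable_swap.prodMap measurable_id
  have C4 := C2.map hswid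
  have EM2 : (P.map (fun ω => ((Z ω, Y ω), X ω))).map (Prod.map Prod.swap id)
      = P.map (fun ω => ((Y ω, Z ω), X ω)) := by
    rw [Measure.map_map hswid (hZY.prodMk hX)]
    rfl
  have ER2 : ((P.map (fun ω => (Z ω, Y ω))) ⊗ₘ (κ1.comap Prod.fst measurable_fst)).map
        (Prod.map Prod.swap id)
      = (P.map (fun ω => (Y ω, Z ω))) ⊗ₘ (κ1.comap Prod.snd measurable_snd) := by
    have hcc : (κ1.comap Prod.snd hms).comap Prod.swap hmw
        = κ1.comap Prod.fst measurable_fst := rfl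
    rw [← hcc, map_compProd_comap _ hmw, Measure.map_map measurable_swap hZY]
    rfl
  rw [EM2, ER2] at C4
  -- side 2
  have h2' : ∀ᵐ y ∂(P.map Y), MutuallyAC (η y) ((η1.prod η2) y) := by
    filter_upwards [h2] with y hy
    rw [Kernel.prod_apply, hη1, hη2, Kernel.map_apply _ measurable_fst,
      Kernel.map_apply _ measurable_snd]
    exact hy
  have C1' : MutuallyAC ((P.map Y) ⊗ₘ η) ((P.map Y) ⊗ₘ (η1.prod η2)) :=
    mutuallyAC_compProd_right _ _ _ h2'
  have hm2' : Measurable (fun p : β × α × γ => ((p.1, p.2.2), p.2.1)) :=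
    (measurable_fst.prodMk measurable_snd.snd).prodMk measurable_snd.fst
  have C2' := C1'.map hm2'
  have EM1' : ((P.map Y) ⊗ₘ η).map (fun p : β × α × γ => ((p.1, p.2.2), p.2.1))
      = P.map (fun ω => ((Y ω, Z ω), X ω)) := by
    rw [← E1', Measure.map_map hm2' (hY.prodMk hXZ)]
    rfl
  have ER1' : ((P.map Y) ⊗ₘ (η1.prod η2)).map (fun p : β × α × γ => ((p.1, p.2.2), p.2.1))
      = (P.map (fun ω => (Y ω, Z ω))) ⊗ₘ (η1.comap Prod.fst measurable_fst) := by
    rw [compProd_prod_assoc, E2']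
  rw [EM1', ER1'] at C2'
  -- combine the two sides
  have C6 : MutuallyAC ((P.map (fun ω => (Y ω, Z ω))) ⊗ₘ (κ1.comap Prod.snd measurable_snd))
      ((P.map (fun ω => (Y ω, Z ω))) ⊗ₘ (η1.comap Prod.fst measurable_fst)) :=
    C4.symm.trans C2'
  have C7 : MutuallyAC (((P.map Y).prod (P.map Z)) ⊗ₘ (κ1.comap Prod.snd measurable_snd))
      (((P.map Y).prod (P.map Z)) ⊗ₘ (η1.comap Prod.fst measurable_fst)) :=
    ((mutuallyAC_compProd_left h3.symm _).trans C6).trans (mutuallyAC_compProd_left h3 _)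
  have C8a := ae_absolutelyContinuous_of_compProd _ _ _ C7.1
  have C8b := ae_absolutelyContinuous_of_compProd _ _ _ C7.2
  have C8 : ∀ᵐ p ∂((P.map Y).prod (P.map Z)), MutuallyAC (κ1 p.2) (η1 p.1) := by
    filter_upwards [C8a, C8b] with p hp1 hp2
    rw [Kernel.comap_apply, Kernel.comap_apply] at hp1 hp2
    exact ⟨hp1, hp2⟩
  have C9 := Measure.ae_ae_of_ae_prod C8
  haveI : (MeasureTheory.ae (P.map Y)).NeBot := ae_neBot.2 (IsProbabilityMeasure.ne_zero _)
  obtain ⟨y₀, hy₀⟩ := C9.exists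
  -- the marginal of X
  have EsndX : ((P.map Z) ⊗ₘ κ1).snd = P.map X := by
    rw [E3]
    show (P.map (fun ω => (Z ω, X ω))).map Prod.snd = P.map X
    rw [Measure.map_map measurable_snd (hZ.prodMk hX)]
    rfl
  have C10 : MutuallyAC (P.map X) (η1 y₀) := by
    rw [← EsndX]
    exact mutuallyAC_snd_compProd _ _ _ hy₀
  have C11 : ∀ᵐ z ∂(P.map Z), MutuallyAC (κ1 z) (P.map X) := by
    filter_upwards [hy₀] with z hz using hz.trans C10.symm
  have C12 : ∀ᵐ p ∂((P.map Y).prod (P.map Z)),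
      MutuallyAC ((κ1.comap Prod.snd hms) p) ((Kernel.const (β × γ) (P.map X)) p) := by
    filter_upwards [ae_prod_snd (P.map Y) (P.map Z) C11] with p hp
    rw [Kernel.comap_apply, Kernel.const_apply]
    exact hp
  have C13 : MutuallyAC (((P.map Y).prod (P.map Z)) ⊗ₘ (κ1.comap Prod.snd hms))
      (((P.map Y).prod (P.map Z)).prod (P.map X)) := by
    have h := mutuallyAC_compProd_right ((P.map Y).prod (P.map Z))
      (κ1.comap Prod.snd hms) (Kernel.const _ (P.map X)) C12
    rwa [Measure.compProd_const] at h
  have C14 : MutuallyAC (P.map (fun ω => ((Y ω, Z ω), X ω)))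
      (((P.map Y).prod (P.map Z)).prod (P.map X)) :=
    (C4.trans (mutuallyAC_compProd_left h3 _)).trans C13
  have C15 := C14.map measurable_swap
  rw [Measure.map_map measurable_swap (hYZ.prodMk hX), Measure.prod_swap] at C15
  exact C15
end

section
/- Let $(\Omega, P)$ be a probability space and $X, Y, Z$ random variables with values in standard Borel spaces. Assume: (1) $X$ and $Y$ are independent conditionally on $Z$; (2) $X$ and $Z$ are independent conditionally on $Y$; and (3) $Y$ and $Z$ are independent. Then $X$, $Y$ and $Z$ are jointly independent. -/
open MeasureTheory ProbabilityTheory Set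

lemma key_cond_lemma
    {Ω α β γ : Type*}
    [MeasurableSpace Ω] [MeasurableSpace α] [MeasurableSpace β] [MeasurableSpace γ]
    [StandardBorelSpace α] [StandardBorelSpace β]
    [Nonempty α] [Nonempty β]
    (P : Measure Ω) [IsProbabilityMeasure P]
    (X : Ω → α) (Y : Ω → β) (Z : Ω → γ)
    (hX : Measurable X) (hY : Measurable Y) (hZ : Measurable Z)
    (h1 : ∀ᵐ z ∂(P.map Z),
      condDistrib (fun ω => (X ω, Y ω)) Z P z =
        ((condDistrib (fun ω => (X ω, Y ω)) Z P z).map Prod.fst).prod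
          ((condDistrib (fun ω => (X ω, Y ω)) Z P z).map Prod.snd))
    (h3 : P.map (fun ω => (Y ω, Z ω)) = (P.map Y).prod (P.map Z))
    {A : Set α} {B : Set β} {C : Set γ}
    (hA : MeasurableSet A) (hB : MeasurableSet B) (hC : MeasurableSet C) :
    P (Z ⁻¹' C ∩ (X ⁻¹' A ∩ Y ⁻¹' B)) = P.map Y B * P (Z ⁻¹' C ∩ X ⁻¹' A) := by
  have hXY : Measurable fun ω => (X ω, Y ω) := hX.prodMk hY
  set κ := condDistrib (fun ω => (X ω, Y ω)) Z P with hκdef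
  have hcomp : P.map Z ⊗ₘ κ = P.map (fun ω => (Z ω, (X ω, Y ω))) := by
    rw [hκdef, condDistrib, ← Measure.fst_map_prodMk (X := Z) hXY,
      Measure.disintegrate]
  have hmap : ∀ {s : Set (α × β)}, MeasurableSet s → ∀ {C' : Set γ}, MeasurableSet C' →
      (P.map (fun ω => (Z ω, (X ω, Y ω)))) (C' ×ˢ s)
        = P (Z ⁻¹' C' ∩ (fun ω => (X ω, Y ω)) ⁻¹' s) := by
    intro s hs C' hC'
    rw [Measure.map_apply (hZ.prodMk hXY) (hC'.prod hs), Set.mk_preimage_prod]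
  have hYZ : ∀ {C' : Set γ}, MeasurableSet C' →
      P (Z ⁻¹' C' ∩ Y ⁻¹' B) = P.map Y B * P.map Z C' := by
    intro C' hC'
    have := congrArg (fun μ : Measure (β × γ) => μ (B ×ˢ C')) h3
    simp only [Measure.prod_prod] at this
    rw [Measure.map_apply (hY.prodMk hZ) (hB.prod hC'), Set.mk_preimage_prod] at this
    rw [Set.inter_comm, this]
  have margY : (fun z => κ z (Prod.snd ⁻¹' B)) =ᵐ[P.map Z] fun _ => P.map Y B := by
    apply ae_eq_of_forall_setLIntegral_eq_of_sigmaFinite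
      (Kernel.measurable_coe κ (measurable_snd hB)) measurable_const
    intro C' hC' _
    rw [← Measure.compProd_apply_prod hC' (measurable_snd hB), hcomp,
      hmap (measurable_snd hB) hC', setLIntegral_const]
    have : (fun ω => (X ω, Y ω)) ⁻¹' (Prod.snd ⁻¹' B) = Y ⁻¹' B := rfl
    rw [this, hYZ hC', mul_comm (P.map Y B)]
  have e2 : ∀ᵐ z ∂(P.map Z), κ z (A ×ˢ B) = κ z (Prod.fst ⁻¹' A) * P.map Y B := by
    filter_upwards [h1, margY] with z hz hz'
    haveI : IsProbabilityMeasure (κ z) := by infer_instance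
    haveI : IsProbabilityMeasure ((κ z).map Prod.fst) :=
      Measure.isProbabilityMeasure_map measurable_fst.aemeasurable
    haveI : IsProbabilityMeasure ((κ z).map Prod.snd) :=
      Measure.isProbabilityMeasure_map measurable_snd.aemeasurable
    calc κ z (A ×ˢ B)
        = (((κ z).map Prod.fst).prod ((κ z).map Prod.snd)) (A ×ˢ B) := by rw [← hz]
      _ = (κ z).map Prod.fst A * (κ z).map Prod.snd B := Measure.prod_prod A B
      _ = κ z (Prod.fst ⁻¹' A) * κ z (Prod.snd ⁻¹' B) := by
          rw [Measure.map_apply measurable_fst hA, Measure.map_apply measurable_snd hB]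
      _ = κ z (Prod.fst ⁻¹' A) * P.map Y B := by rw [hz']
  have e1 : P (Z ⁻¹' C ∩ (X ⁻¹' A ∩ Y ⁻¹' B)) = ∫⁻ z in C, κ z (A ×ˢ B) ∂(P.map Z) := by
    rw [← Set.mk_preimage_prod X Y, ← hmap (hA.prod hB) hC, ← hcomp,
      Measure.compProd_apply_prod hC (hA.prod hB)]
  have e3 : ∫⁻ z in C, κ z (Prod.fst ⁻¹' A) ∂(P.map Z) = P (Z ⁻¹' C ∩ X ⁻¹' A) := by
    rw [← Measure.compProd_apply_prod hC (measurable_fst hA), hcomp,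
      hmap (measurable_fst hA) hC]
    rfl
  rw [e1, lintegral_congr_ae (ae_restrict_of_ae e2),
    lintegral_mul_const _ (Kernel.measurable_coe κ (measurable_fst hA)), e3, mul_comm]

/-- If `X` and `Y` are independent conditionally on `Z`, `X` and `Z` are independent
conditionally on `Y`, and `Y` and `Z` are independent, then `X`, `Y`, `Z` are jointly
independent: the law of `(X, Y, Z)` is the product of the three marginals. -/
theorem joint_independence_of_pairwise_conditional
    {Ω α β γ : Type*}
    [MeasurableSpace Ω] [MeasurableSpace α] [MeasurableSpace β] [MeasurableSpace γ]
    [StandardBorelSpace α] [StandardBorelSpace β] [StandardBorelSpace γ]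
    [Nonempty α] [Nonempty β] [Nonempty γ]
    (P : Measure Ω) [IsProbabilityMeasure P]
    (X : Ω → α) (Y : Ω → β) (Z : Ω → γ)
    (hX : Measurable X) (hY : Measurable Y) (hZ : Measurable Z)
    (h1 : ∀ᵐ z ∂(P.map Z),
      condDistrib (fun ω => (X ω, Y ω)) Z P z =
        ((condDistrib (fun ω => (X ω, Y ω)) Z P z).map Prod.fst).prod
          ((condDistrib (fun ω => (X ω, Y ω)) Z P z).map Prod.snd))
    (h2 : ∀ᵐ y ∂(P.map Y),
      condDistrib (fun ω => (X ω, Z ω)) Y P y =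
        ((condDistrib (fun ω => (X ω, Z ω)) Y P y).map Prod.fst).prod
          ((condDistrib (fun ω => (X ω, Z ω)) Y P y).map Prod.snd))
    (h3 : P.map (fun ω => (Y ω, Z ω)) = (P.map Y).prod (P.map Z)) :
    P.map (fun ω => (X ω, Y ω, Z ω)) = (P.map X).prod ((P.map Y).prod (P.map Z)) := by
  haveI : IsProbabilityMeasure (P.map X) := Measure.isProbabilityMeasure_map hX.aemeasurable
  haveI : IsProbabilityMeasure (P.map Y) := Measure.isProbabilityMeasure_map hY.aemeasurable
  haveI : IsProbabilityMeasure (P.map Z) := Measure.isProbabilityMeasure_map hZ.aemeasurable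
  have h3' : P.map (fun ω => (Z ω, Y ω)) = (P.map Z).prod (P.map Y) := by
    have : (fun ω => (Z ω, Y ω)) = Prod.swap ∘ (fun ω => (Y ω, Z ω)) := rfl
    rw [this, ← Measure.map_map measurable_swap (hY.prodMk hZ), h3, Measure.prod_swap]
  -- the master formula for boxes
  have hF : ∀ {A : Set α} {B : Set β} {C : Set γ}, MeasurableSet A → MeasurableSet B →
      MeasurableSet C →
      P (X ⁻¹' A ∩ (Y ⁻¹' B ∩ Z ⁻¹' C)) = P.map X A * (P.map Y B * P.map Z C) := by
    intro A B C hA hB hC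
    have k1 := key_cond_lemma P X Y Z hX hY hZ h1 h3 hA hB hC
    have k2 := key_cond_lemma P X Z Y hX hZ hY h2 h3' hA hC MeasurableSet.univ
    simp only [Set.preimage_univ, Set.univ_inter] at k2
    have hset : X ⁻¹' A ∩ (Y ⁻¹' B ∩ Z ⁻¹' C) = Z ⁻¹' C ∩ (X ⁻¹' A ∩ Y ⁻¹' B) := by
      ext ω; simp only [Set.mem_inter_iff, Set.mem_preimage]; tauto
    have hset2 : Z ⁻¹' C ∩ X ⁻¹' A = X ⁻¹' A ∩ Z ⁻¹' C := Set.inter_comm _ _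
    have hXA : P (X ⁻¹' A) = P.map X A := (Measure.map_apply hX hA).symm
    rw [hset, k1, hset2, k2, hXA]
    ring
  -- conclude by identifying the two measures on rectangles
  have hf : Measurable fun ω => (X ω, Y ω, Z ω) := hX.prodMk (hY.prodMk hZ)
  refine (Measure.prod_eq fun s t hs ht => ?_).symm
  set M := P.map (fun ω => (X ω, Y ω, Z ω)) with hM
  haveI : IsProbabilityMeasure M := Measure.isProbabilityMeasure_map hf.aemeasurable
  set ν : Measure (β × γ) := (M.restrict (Prod.fst ⁻¹' s)).map Prod.snd with hνdef
  have hν : ∀ {t' : Set (β × γ)}, MeasurableSet t' → ν t' = M (s ×ˢ t') := by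
    intro t' ht'
    rw [hνdef, Measure.map_apply measurable_snd ht',
      Measure.restrict_apply (measurable_snd ht')]
    congr 1
    ext p
    simp only [Set.mem_inter_iff, Set.mem_preimage, Set.mem_prod]
    tauto
  have hrect : ∀ B C, MeasurableSet B → MeasurableSet C →
      ν (B ×ˢ C) = ((P.map X s • P.map Y) B) * (P.map Z C) := by
    intro B C hB hC
    rw [hν ((hB.prod hC)), hM, Measure.map_apply hf (hs.prod (hB.prod hC))]
    have hpre : (fun ω => (X ω, Y ω, Z ω)) ⁻¹' (s ×ˢ B ×ˢ C)
        = X ⁻¹' s ∩ (Y ⁻¹' B ∩ Z ⁻¹' C) := by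
      ext ω
      simp only [Set.mem_preimage, Set.mem_prod, Set.mem_inter_iff]
    rw [hpre, hF hs hB hC, Measure.smul_apply, smul_eq_mul]
    ring
  haveI : IsFiniteMeasure (P.map X s • P.map Y) := by
    constructor
    rw [Measure.smul_apply, smul_eq_mul]
    exact ENNReal.mul_lt_top (measure_lt_top _ _) (measure_lt_top _ _)
  have hν_eq : ν = (P.map X s • P.map Y).prod (P.map Z) :=
    (Measure.prod_eq fun B C hB hC => hrect B C hB hC).symm
  calc M (s ×ˢ t) = ν t := (hν ht).symm
    _ = ((P.map X s • P.map Y).prod (P.map Z)) t := by rw [hν_eq]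
    _ = ∫⁻ y, P.map Z (Prod.mk y ⁻¹' t) ∂(P.map X s • P.map Y) := Measure.prod_apply ht
    _ = P.map X s * ∫⁻ y, P.map Z (Prod.mk y ⁻¹' t) ∂(P.map Y) := lintegral_smul_measure _ _
    _ = P.map X s * ((P.map Y).prod (P.map Z)) t := by rw [Measure.prod_apply ht]
end
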